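/- The chromatic number of the enhanced power graph of a finite group G equals the maximum order of an element of G. -/

import Mathlib

def enhancedPowerGraph (G : Type*) [Group G] : SimpleGraph G where
  Adj x y := x ≠ y ∧ IsCyclic (Subgroup.closure {x, y} : Subgroup G)
  symm := ⟨by
    intro x y ⟨hne, hc⟩
    exact ⟨hne.symm, by rwa [Set.pair_comm]⟩⟩
  loopless := ⟨by intro x ⟨hne, _⟩; exact hne rfl⟩

open Subgroup

section Aux

variable {G : Type*} [Group G]

lemma pickGen_exists (H : Subgroup G) :
    ∃ g : G, (∃ g' : G, Subgroup.zpowers g' = H) → Subgroup.zpowers g = H := by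
  by_cases h : ∃ g' : G, Subgroup.zpowers g' = H
  · exact ⟨h.choose, fun _ => h.choose_spec⟩
  · exact ⟨1, fun h' => absurd h' h⟩

/-- A canonical generator attached to each subgroup (meaningful for cyclic `zpowers` ones). -/
noncomputable def pickGen (H : Subgroup G) : G := (pickGen_exists H).choose

lemma pickGen_spec {H : Subgroup G} (h : ∃ g : G, Subgroup.zpowers g = H) :
    Subgroup.zpowers (pickGen H) = H := (pickGen_exists H).choose_spec h

/-- A canonical generator of `zpowers x`, depending only on the subgroup `zpowers x`. -/
noncomputable def genOf (x : G) : G := pickGen (Subgroup.zpowers x)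

lemma genOf_zpowers (x : G) : Subgroup.zpowers (genOf x) = Subgroup.zpowers x :=
  pickGen_spec ⟨x, rfl⟩

lemma genOf_congr {x y : G} (h : Subgroup.zpowers x = Subgroup.zpowers y) :
    genOf x = genOf y := by
  unfold genOf; rw [h]

lemma orderOf_genOf (x : G) : orderOf (genOf x) = orderOf x := by
  rw [← Nat.card_zpowers, ← Nat.card_zpowers, genOf_zpowers]

lemma adj_exists {x y : G} (h : (enhancedPowerGraph G).Adj x y) :
    ∃ z : G, x ∈ Subgroup.zpowers z ∧ y ∈ Subgroup.zpowers z := by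
  obtain ⟨hne, hcyc⟩ := h
  obtain ⟨ζ, hζ⟩ := hcyc.exists_generator
  have hx : x ∈ Subgroup.closure ({x, y} : Set G) :=
    Subgroup.subset_closure (by simp)
  have hy : y ∈ Subgroup.closure ({x, y} : Set G) :=
    Subgroup.subset_closure (by simp)
  refine ⟨(ζ : G), ?_, ?_⟩
  · obtain ⟨k, hk⟩ := Subgroup.mem_zpowers_iff.mp (hζ ⟨x, hx⟩)
    exact Subgroup.mem_zpowers_iff.mpr ⟨k, by
      have := congrArg (Subtype.val) hk
      simpa using this⟩
  · obtain ⟨k, hk⟩ := Subgroup.mem_zpowers_iff.mp (hζ ⟨y, hy⟩)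
    exact Subgroup.mem_zpowers_iff.mpr ⟨k, by
      have := congrArg (Subtype.val) hk
      simpa using this⟩

/-- Key arithmetic: Farey-type separation of the floor coloring. -/
lemma farey_div_lt {Mx n n' j j' : ℕ} (hn : 0 < n) (hn' : 0 < n')
    (hlt : j * n' < j' * n) (hM : n * n' ≤ Nat.gcd n n' * Mx) :
    j * Mx / n < j' * Mx / n' := by
  set g := Nat.gcd n n' with hg
  have hgd : g ∣ j' * n - j * n' :=
    Nat.dvd_sub (Dvd.dvd.mul_left (Nat.gcd_dvd_left n n') j')
      (Dvd.dvd.mul_left (Nat.gcd_dvd_right n n') j)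
  have hnum : j * n' + g ≤ j' * n := by
    have h1 : g ≤ j' * n - j * n' := Nat.le_of_dvd (by omega) hgd
    omega
  set q := j * Mx / n with hq
  have h1 : q * n ≤ j * Mx := Nat.div_mul_le_self _ _
  have h2 : (q + 1) * n' * n ≤ j' * Mx * n := by nlinarith [h1, hnum, hM]
  have h3 : (q + 1) * n' ≤ j' * Mx := Nat.le_of_mul_le_mul_right h2 hn
  have h4 : q + 1 ≤ j' * Mx / n' := (Nat.le_div_iff_mul_le hn').mpr h3
  omega

variable [Fintype G]

lemma exists_nat_pow_eq {z x : G} (h : x ∈ Subgroup.zpowers z) :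
    ∃ k : ℕ, k < orderOf z ∧ z ^ k = x := by
  have h' : x ∈ Submonoid.powers z :=
    (isOfFinOrder_of_finite z).mem_powers_iff_mem_zpowers.mpr h
  rw [Submonoid.mem_powers_iff] at h'
  obtain ⟨k, hk⟩ := h'
  exact ⟨k % orderOf z, Nat.mod_lt _ (orderOf_pos z), by rw [pow_mod_orderOf]; exact hk⟩

lemma exists_j (x : G) : ∃ k : ℕ, k < orderOf x ∧ (genOf x) ^ k = x := by
  have h := exists_nat_pow_eq (z := genOf x) (x := x)
    (by rw [genOf_zpowers]; exact Subgroup.mem_zpowers x)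
  rwa [orderOf_genOf] at h

/-- The discrete logarithm of `x` w.r.t. the canonical generator of `zpowers x`. -/
noncomputable def jOf (x : G) : ℕ := (exists_j x).choose

lemma jOf_lt (x : G) : jOf x < orderOf x := (exists_j x).choose_spec.1

lemma genOf_pow_jOf (x : G) : (genOf x) ^ (jOf x) = x := (exists_j x).choose_spec.2

lemma jOf_coprime (x : G) : Nat.Coprime (orderOf x) (jOf x) := by
  have h : orderOf ((genOf x) ^ (jOf x)) = orderOf x := by rw [genOf_pow_jOf]
  rw [orderOf_pow, orderOf_genOf] at h
  rcases Nat.div_eq_self.mp h with h0 | h1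
  · exact absurd h0 (orderOf_pos x).ne'
  · exact h1

omit [Fintype G] in
lemma zpowers_pow_gcd (z : G) (a : ℕ) :
    Subgroup.zpowers (z ^ a) = Subgroup.zpowers (z ^ Nat.gcd a (orderOf z)) := by
  apply le_antisymm
  · rw [Subgroup.zpowers_le]
    refine Subgroup.mem_zpowers_iff.mpr ⟨((a / Nat.gcd a (orderOf z) : ℕ) : ℤ), ?_⟩
    rw [zpow_natCast, ← pow_mul, Nat.mul_div_cancel' (Nat.gcd_dvd_left a (orderOf z))]
  · rw [Subgroup.zpowers_le]
    refine Subgroup.mem_zpowers_iff.mpr ⟨Nat.gcdA a (orderOf z), ?_⟩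
    have hbez := Nat.gcd_eq_gcd_ab a (orderOf z)
    have h2 : z ^ ((orderOf z : ℤ) * Nat.gcdB a (orderOf z)) = 1 := by
      rw [zpow_mul, zpow_natCast, pow_orderOf_eq_one, one_zpow]
    calc (z ^ a) ^ Nat.gcdA a (orderOf z)
        = z ^ ((a : ℤ) * Nat.gcdA a (orderOf z)) := by
          rw [← zpow_natCast z a, ← zpow_mul]
      _ = z ^ ((a : ℤ) * Nat.gcdA a (orderOf z)) *
            z ^ ((orderOf z : ℤ) * Nat.gcdB a (orderOf z)) := by rw [h2, mul_one]
      _ = z ^ ((a : ℤ) * Nat.gcdA a (orderOf z) +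
            (orderOf z : ℤ) * Nat.gcdB a (orderOf z)) := (zpow_add z _ _).symm
      _ = z ^ ((Nat.gcd a (orderOf z) : ℤ)) := by rw [← hbez]
      _ = z ^ (Nat.gcd a (orderOf z)) := zpow_natCast z _

lemma zpowers_pow_eq_of_orderOf_eq {z : G} {a b : ℕ}
    (h : orderOf (z ^ a) = orderOf (z ^ b)) :
    Subgroup.zpowers (z ^ a) = Subgroup.zpowers (z ^ b) := by
  have hd : 0 < orderOf z := orderOf_pos z
  have ha := orderOf_pow (x := z) (n := a)
  have hb := orderOf_pow (x := z) (n := b)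
  have hge : Nat.gcd (orderOf z) a = Nat.gcd (orderOf z) b := by
    have h1 : orderOf z / (orderOf z / Nat.gcd (orderOf z) a) = Nat.gcd (orderOf z) a :=
      Nat.div_div_self (Nat.gcd_dvd_left _ _) hd.ne'
    have h2 : orderOf z / (orderOf z / Nat.gcd (orderOf z) b) = Nat.gcd (orderOf z) b :=
      Nat.div_div_self (Nat.gcd_dvd_left _ _) hd.ne'
    rw [← h1, ← h2, ← ha, ← hb, h]
  rw [zpowers_pow_gcd z a, zpowers_pow_gcd z b, Nat.gcd_comm a, Nat.gcd_comm b, hge]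

end Aux

theorem stmt_7 {G : Type*} [Group G] [Fintype G] :
    (enhancedPowerGraph G).chromaticNumber = (Finset.univ.sup (fun g : G => orderOf g) : ℕ) := by
  classical
  set M := Finset.univ.sup (fun g : G => orderOf g) with hM
  have hord_le : ∀ g : G, orderOf g ≤ M := fun g => Finset.le_sup (Finset.mem_univ g)
  obtain ⟨g₀, -, hg₀⟩ := Finset.exists_mem_eq_sup Finset.univ
    ⟨1, Finset.mem_univ (1 : G)⟩ (fun g : G => orderOf g)
  have hg₀M : M = orderOf g₀ := hM.trans hg₀
  have hMpos : 0 < M := by rw [hg₀M]; exact orderOf_pos g₀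
  apply le_antisymm
  · -- upper bound: an explicit coloring with M colors
    have hlt : ∀ x : G, jOf x * M / orderOf x < M := by
      intro x
      have h1 : jOf x < orderOf x := jOf_lt x
      have h2 : 0 < orderOf x := orderOf_pos x
      rw [Nat.div_lt_iff_lt_mul h2]
      nlinarith [h1, hMpos]
    have key : ∀ x y : G, (enhancedPowerGraph G).Adj x y →
        jOf x * M / orderOf x ≠ jOf y * M / orderOf y := by
      intro x y hadj
      obtain ⟨z, hxz, hyz⟩ := adj_exists hadj
      set n := orderOf x with hn
      set n' := orderOf y with hn'
      have hnpos : 0 < n := orderOf_pos x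
      have hn'pos : 0 < n' := orderOf_pos y
      have hdx : n ∣ orderOf z := orderOf_dvd_of_mem_zpowers hxz
      have hdy : n' ∣ orderOf z := orderOf_dvd_of_mem_zpowers hyz
      have hlcm_le : Nat.lcm n n' ≤ M :=
        le_trans (Nat.le_of_dvd (orderOf_pos z) (Nat.lcm_dvd hdx hdy)) (hord_le z)
      have hsep : n * n' ≤ Nat.gcd n n' * M := by
        have h1 : Nat.gcd n n' * Nat.lcm n n' = n * n' := Nat.gcd_mul_lcm n n'
        calc n * n' = Nat.gcd n n' * Nat.lcm n n' := h1.symm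
          _ ≤ Nat.gcd n n' * M := Nat.mul_le_mul_left _ hlcm_le
      have hcross : jOf x * n' ≠ jOf y * n := by
        intro hc
        have hcx : Nat.Coprime n (jOf x) := jOf_coprime x
        have hcy : Nat.Coprime n' (jOf y) := jOf_coprime y
        have hnn' : n = n' := by
          have d1 : n ∣ jOf x * n' := by rw [hc]; exact Dvd.intro_left _ rfl
          have d2 : n' ∣ jOf y * n := by rw [← hc]; exact Dvd.intro_left _ rfl
          exact Nat.dvd_antisymm (hcx.dvd_of_dvd_mul_left d1) (hcy.dvd_of_dvd_mul_left d2)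
        have hj : jOf x = jOf y := by
          rw [hnn'] at hc
          exact Nat.eq_of_mul_eq_mul_right hn'pos hc
        obtain ⟨a, -, hza⟩ := exists_nat_pow_eq hxz
        obtain ⟨b, -, hzb⟩ := exists_nat_pow_eq hyz
        have horder : orderOf (z ^ a) = orderOf (z ^ b) := by
          rw [hza, hzb, ← hn, ← hn', hnn']
        have hzp : Subgroup.zpowers x = Subgroup.zpowers y := by
          rw [← hza, ← hzb]
          exact zpowers_pow_eq_of_orderOf_eq horder
        have hgen : genOf x = genOf y := genOf_congr hzp
        have : x = y := by
          rw [← genOf_pow_jOf x, ← genOf_pow_jOf y, hgen, hj]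
        exact hadj.1 this
      rcases Nat.lt_trichotomy (jOf x * n') (jOf y * n) with hlt' | heq | hgt
      · exact Nat.ne_of_lt (farey_div_lt hnpos hn'pos hlt' hsep)
      · exact absurd heq hcross
      · refine Nat.ne_of_gt (farey_div_lt hn'pos hnpos hgt ?_)
        rwa [Nat.gcd_comm, Nat.mul_comm n' n]
    have hcol : (enhancedPowerGraph G).Colorable M := by
      refine ⟨SimpleGraph.Coloring.mk (fun x => ⟨jOf x * M / orderOf x, hlt x⟩) ?_⟩
      intro a b hab
      simpa [Fin.ext_iff] using key a b hab
    exact hcol.chromaticNumber_le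
  · -- lower bound: `zpowers g₀` is a clique of size `M`
    haveI hcyc0 : IsCyclic (Subgroup.zpowers g₀) := by
      refine ⟨⟨⟨g₀, Subgroup.mem_zpowers g₀⟩, fun w => ?_⟩⟩
      obtain ⟨k, hk⟩ := Subgroup.mem_zpowers_iff.mp w.2
      refine Subgroup.mem_zpowers_iff.mpr ⟨k, ?_⟩
      apply Subtype.ext
      simpa using hk
    have hfin : ((Subgroup.zpowers g₀ : Subgroup G) : Set G).Finite := Set.toFinite _
    have hclique : (enhancedPowerGraph G).IsClique ((Subgroup.zpowers g₀ : Subgroup G) : Set G) := by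
      intro u hu v hv huv
      refine ⟨huv, ?_⟩
      have hle : Subgroup.closure ({u, v} : Set G) ≤ Subgroup.zpowers g₀ := by
        rw [Subgroup.closure_le]
        intro w hw
        rcases hw with rfl | rfl
        · exact hu
        · exact hv
      exact isCyclic_of_surjective _ (Subgroup.subgroupOfEquivOfLe hle).surjective
    have hclique' : (enhancedPowerGraph G).IsClique (hfin.toFinset : Set G) := by
      rwa [Set.Finite.coe_toFinset]
    have hcard : hfin.toFinset.card = M := by
      rw [Set.Finite.card_toFinset, hg₀M]
      rw [← Nat.card_zpowers g₀]
      exact Nat.card_eq_fintype_card.symm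
    calc (M : ℕ∞) = (hfin.toFinset.card : ℕ∞) := by rw [hcard]
      _ ≤ (enhancedPowerGraph G).chromaticNumber := hclique'.card_le_chromaticNumber
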